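/- Let λ be a partition of n, let s = sq(λ). Then the degree of the irreducible character χ_λ of S_n satisfies χ_λ(1) ≥ C(n, s²) · (s/n)^{s²} · (s²)!. -/

import Mathlib

/-- `l` represents a partition of `n` (0-indexed parts). -/
def IsPartitionFun (n : ℕ) (l : ℕ → ℕ) : Prop :=
  Antitone l ∧ (∀ i, n ≤ i → l i = 0) ∧ ∑ i ∈ Finset.range n, l i = n

/-- side of largest square in the Ferrers diagram: largest `j` with `λ_j ≥ j`. -/
def sqSide (n : ℕ) (l : ℕ → ℕ) : ℕ :=
  Nat.findGreatest (fun j => 0 < j ∧ j ≤ l (j - 1)) n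

/-- the conjugate partition (0-indexed): `λ'_j = #{i : λ_i > j}`. -/
def conjPart (n : ℕ) (l : ℕ → ℕ) (j : ℕ) : ℕ :=
  ((Finset.range n).filter fun i => j + 1 ≤ l i).card

/-- hook length of the (0-indexed) cell `(i,j)`. -/
def hookLength (n : ℕ) (l : ℕ → ℕ) (i j : ℕ) : ℕ :=
  (l i - (j + 1)) + (conjPart n l j - (i + 1)) + 1

/-- the cells of the Ferrers diagram of `λ` (0-indexed). -/
def cells (n : ℕ) (l : ℕ → ℕ) : Finset (ℕ × ℕ) :=
  (Finset.range n ×ˢ Finset.range n).filter fun p => p.2 < l p.1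

/-- the degree `χ_λ(1)` of the irreducible character of `S_n` indexed by `λ`, given by
the hook length formula `χ_λ(1) = n! / ∏ h_{i,j}`. -/
noncomputable def charDegree (n : ℕ) (l : ℕ → ℕ) : ℝ :=
  (n.factorial : ℝ) / ∏ p ∈ cells n l, (hookLength n l p.1 p.2 : ℝ)

lemma conjPart_le (M : ℕ) (f : ℕ → ℕ) (j : ℕ) : conjPart M f j ≤ M := by
  classical
  calc conjPart M f j ≤ (Finset.range M).card := Finset.card_filter_le _ _
  _ = M := Finset.card_range M

lemma lt_conjPart_iff (M : ℕ) (f : ℕ → ℕ) (hf : Antitone f) (h0 : ∀ i, M ≤ i → f i = 0)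
    (j i : ℕ) : i < conjPart M f j ↔ j + 1 ≤ f i := by
  classical
  constructor
  · intro hi
    by_contra hc
    push_neg at hc
    have hsub : (Finset.range M).filter (fun i' => j + 1 ≤ f i') ⊆ Finset.range i := by
      intro i' hi'
      simp only [Finset.mem_filter, Finset.mem_range] at hi' ⊢
      by_contra hii
      push_neg at hii
      have := hf hii
      omega
    have := Finset.card_le_card hsub
    simp only [Finset.card_range] at this
    unfold conjPart at hi
    omega
  · intro hfi
    have hiM : i < M := by
      by_contra hiM
      push_neg at hiM
      rw [h0 i hiM] at hfi; omega
    have hsub : Finset.range (i + 1) ⊆ (Finset.range M).filter (fun i' => j + 1 ≤ f i') := by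
      intro i' hi'
      simp only [Finset.mem_range] at hi'
      simp only [Finset.mem_filter, Finset.mem_range]
      exact ⟨by omega, le_trans hfi (hf (by omega))⟩
    have := Finset.card_le_card hsub
    simp only [Finset.card_range] at this
    unfold conjPart
    omega

lemma hookProd_le (M : ℕ) (N : ℕ) : ∀ f : ℕ → ℕ, Antitone f → (∀ i, M ≤ i → f i = 0) →
    f 0 ≤ M → (∑ i ∈ Finset.range M, f i) = N →
    ∏ p ∈ cells M f, hookLength M f p.1 p.2 ≤ N.factorial := by
  induction N using Nat.strong_induction_on with
  | _ N ih =>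
    intro f hf h0 hb hsum
    by_cases hf0 : f 0 = 0
    · have hz : ∀ i, f i = 0 := fun i => Nat.le_zero.mp (hf0 ▸ hf (Nat.zero_le i))
      have : cells M f = ∅ := by
        rw [Finset.eq_empty_iff_forall_notMem]
        intro p hp
        simp only [cells, Finset.mem_filter] at hp
        rw [hz p.1] at hp
        omega
      rw [this]
      simpa using Nat.one_le_iff_ne_zero.mpr (Nat.factorial_ne_zero N)
    · have hf0' : 1 ≤ f 0 := Nat.one_le_iff_ne_zero.mpr hf0
      have hM : 1 ≤ M := by
        by_contra hM
        push_neg at hM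
        interval_cases M
        rw [h0 0 le_rfl] at hf0'; omega
      set g : ℕ → ℕ := fun i => f (i + 1) with hg
      have hga : Antitone g := fun a b hab => hf (by omega)
      have hg0 : ∀ i, M ≤ i → g i = 0 := fun i hi => h0 _ (by omega)
      have hgb : g 0 ≤ M := le_trans (hf (Nat.zero_le 1)) hb
      have hsum' : ∑ i ∈ Finset.range M, f i = N := hsum
      have hNf : f 0 ≤ N := by
        rw [← hsum]
        exact Finset.single_le_sum (fun i _ => Nat.zero_le _) (Finset.mem_range.mpr hM)
      have hgsum : ∑ i ∈ Finset.range M, g i = N - f 0 := by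
        have h1 : ∑ i ∈ Finset.range (M + 1), f i = ∑ i ∈ Finset.range M, f (i + 1) + f 0 :=
          Finset.sum_range_succ' f M
        rw [Finset.sum_range_succ, hsum, h0 M le_rfl] at h1
        simp only [hg]
        omega
      have hconj : ∀ j, j < f 0 → conjPart M g j = conjPart M f j - 1 := by
        intro j hj
        have key : ∀ i, i < conjPart M g j ↔ i + 1 < conjPart M f j := by
          intro i
          rw [lt_conjPart_iff M g hga hg0, lt_conjPart_iff M f hf h0]
        have h1 := key (conjPart M g j)
        have h2 := key (conjPart M g j - 1)
        have h3 := key (conjPart M f j - 2)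
        have h4 : 0 < conjPart M f j := (lt_conjPart_iff M f hf h0 j 0).mpr (by omega)
        omega
      have hhook : ∀ i j, 1 ≤ i → j < f i →
          hookLength M f i j = hookLength M g (i - 1) j := by
        intro i j hi hj
        have hji : j < f 0 := by have := hf (Nat.zero_le i); omega
        have hcf : i < conjPart M f j := (lt_conjPart_iff M f hf h0 j i).mpr (by omega)
        unfold hookLength
        rw [hconj j hji]
        have : g (i - 1) = f i := by simp only [hg]; congr 1; omega
        rw [this]
        omega
      have hsplit := Finset.prod_filter_mul_prod_filter_not (cells M f) (fun p => p.1 = 0)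
        (fun p => hookLength M f p.1 p.2)
      have hrow : ∏ p ∈ (cells M f).filter (fun p => p.1 = 0), hookLength M f p.1 p.2
          = ∏ j ∈ Finset.range (f 0), hookLength M f 0 j := by
        apply Finset.prod_nbij' (fun p => p.2) (fun j => (0, j))
        · intro p hp
          simp only [cells, Finset.mem_filter, Finset.mem_product, Finset.mem_range] at hp
          obtain ⟨⟨⟨_, _⟩, hlt⟩, h1⟩ := hp
          rw [h1] at hlt
          exact Finset.mem_range.mpr hlt
        · intro j hj
          simp only [Finset.mem_range] at hj
          simp only [cells, Finset.mem_filter, Finset.mem_product, Finset.mem_range]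
          exact ⟨by omega, trivial⟩
        · intro p hp
          simp only [Finset.mem_filter] at hp
          exact Prod.ext hp.2.symm rfl
        · intro j _; rfl
        · intro p hp
          simp only [Finset.mem_filter] at hp
          rw [hp.2]
      have hrest : ∏ p ∈ (cells M f).filter (fun p => ¬ p.1 = 0), hookLength M f p.1 p.2
          = ∏ p ∈ cells M g, hookLength M g p.1 p.2 := by
        apply Finset.prod_nbij' (fun p => (p.1 - 1, p.2)) (fun p => (p.1 + 1, p.2))
        · intro p hp
          simp only [cells, Finset.mem_filter, Finset.mem_product, Finset.mem_range] at hp ⊢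
          obtain ⟨⟨⟨h1, h2⟩, h3⟩, h4⟩ := hp
          have hgp : g (p.1 - 1) = f p.1 := by simp only [hg]; congr 1; omega
          omega
        · intro p hp
          simp only [cells, Finset.mem_filter, Finset.mem_product, Finset.mem_range] at hp ⊢
          obtain ⟨⟨h1, h2⟩, h3⟩ := hp
          have hfp : g p.1 = f (p.1 + 1) := rfl
          have hgz : p.1 + 1 < M := by
            by_contra hc
            push_neg at hc
            have hz := h0 (p.1 + 1) (by omega)
            have h3' : p.2 < f (p.1 + 1) := h3
            omega
          have h3' : p.2 < f (p.1 + 1) := h3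
          exact ⟨⟨⟨hgz, h2⟩, h3'⟩, by omega⟩
        · intro p hp
          simp only [Finset.mem_filter] at hp
          have : p.1 - 1 + 1 = p.1 := by omega
          exact Prod.ext this rfl
        · intro p _; simp
        · intro p hp
          simp only [cells, Finset.mem_filter, Finset.mem_product, Finset.mem_range] at hp
          exact hhook p.1 p.2 (by omega) hp.1.2
      have hc0 : conjPart M f 0 ≤ M := conjPart_le M f 0
      have hc0pos : 0 < conjPart M f 0 := (lt_conjPart_iff M f hf h0 0 0).mpr (by omega)
      have hNc : f 0 + conjPart M f 0 ≤ N + 1 := by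
        have h1 : ∑ i ∈ Finset.range (conjPart M f 0), f i ≤ N := by
          rw [← hsum]
          exact Finset.sum_le_sum_of_subset (Finset.range_subset_range.mpr hc0)
        have h2 : ∑ i ∈ Finset.range (conjPart M f 0), f i
            = f 0 + ∑ i ∈ Finset.Ico 1 (conjPart M f 0), f i := by
          rw [Finset.range_eq_Ico, ← Finset.sum_Ico_consecutive _ (Nat.zero_le 1) hc0pos]
          simp
        have h3 : conjPart M f 0 - 1 ≤ ∑ i ∈ Finset.Ico 1 (conjPart M f 0), f i := by
          calc conjPart M f 0 - 1 = ∑ _i ∈ Finset.Ico 1 (conjPart M f 0), 1 := by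
                rw [Finset.sum_const, Nat.card_Ico, smul_eq_mul, mul_one]
          _ ≤ _ := by
                apply Finset.sum_le_sum
                intro i hi
                simp only [Finset.mem_Ico] at hi
                have := (lt_conjPart_iff M f hf h0 0 i).mp hi.2
                omega
        omega
      have hrowbd : ∏ j ∈ Finset.range (f 0), hookLength M f 0 j ≤ N.descFactorial (f 0) := by
        rw [Nat.descFactorial_eq_prod_range]
        apply Finset.prod_le_prod'
        intro j hj
        simp only [Finset.mem_range] at hj
        have hcj : conjPart M f j ≤ conjPart M f 0 := by
          apply Finset.card_le_card
          intro i hi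
          simp only [Finset.mem_filter] at hi ⊢
          exact ⟨hi.1, by omega⟩
        have hcjpos : 0 < conjPart M f j := (lt_conjPart_iff M f hf h0 j 0).mpr (by omega)
        unfold hookLength
        omega
      have hIH : ∏ p ∈ cells M g, hookLength M g p.1 p.2 ≤ (N - f 0).factorial :=
        ih (N - f 0) (by omega) g hga hg0 hgb hgsum
      calc ∏ p ∈ cells M f, hookLength M f p.1 p.2
          = (∏ j ∈ Finset.range (f 0), hookLength M f 0 j) *
            ∏ p ∈ cells M g, hookLength M g p.1 p.2 := by rw [← hsplit, hrow, hrest]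
        _ ≤ N.descFactorial (f 0) * (N - f 0).factorial := Nat.mul_le_mul hrowbd hIH
        _ = N.factorial := by
            rw [mul_comm]
            exact Nat.factorial_mul_descFactorial hNf

lemma amgm_pow {ι : Type*} (T : Finset ι) (z : ι → ℝ) (c : ℕ) (A : ℝ)
    (hc : T.card = c) (hcpos : 0 < c) (hz : ∀ i ∈ T, 0 ≤ z i)
    (hsum : ∑ i ∈ T, z i ≤ c * A) : ∏ i ∈ T, z i ≤ A ^ c := by
  have hA : 0 ≤ A := by
    have h0 : (0:ℝ) ≤ ∑ i ∈ T, z i := Finset.sum_nonneg hz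
    have hcr : (0:ℝ) < c := by exact_mod_cast hcpos
    nlinarith
  have hgm := Real.geom_mean_le_arith_mean_weighted T (fun _ => (c:ℝ)⁻¹) z
    (fun i _ => by positivity) (by
      rw [Finset.sum_const, hc, nsmul_eq_mul]
      field_simp) hz
  have h1 : ∏ i ∈ T, z i ^ ((c:ℝ)⁻¹) ≤ A := by
    refine hgm.trans ?_
    rw [← Finset.mul_sum (T) z ((c:ℝ)⁻¹)]
    rw [inv_mul_le_iff₀ (by positivity)]
    linarith [hsum]
  have hprodnn : 0 ≤ ∏ i ∈ T, z i ^ ((c:ℝ)⁻¹) :=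
    Finset.prod_nonneg (fun i hi => Real.rpow_nonneg (hz i hi) _)
  have h2 : (∏ i ∈ T, z i ^ ((c:ℝ)⁻¹)) ^ c = ∏ i ∈ T, z i := by
    rw [← Finset.prod_pow]
    apply Finset.prod_congr rfl
    intro i hi
    rw [← Real.rpow_natCast (z i ^ ((c:ℝ)⁻¹)) c, ← Real.rpow_mul (hz i hi),
      inv_mul_cancel₀ (by positivity), Real.rpow_one]
  calc ∏ i ∈ T, z i = (∏ i ∈ T, z i ^ ((c:ℝ)⁻¹)) ^ c := h2.symm
    _ ≤ A ^ c := pow_le_pow_left₀ hprodnn h1 c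

/-- `χ_λ(1) ≥ C(n, s²) · (s/n)^{s²} · (s²)!` where `s = sq(λ)`. -/
theorem stmt2 (n : ℕ) (l : ℕ → ℕ) (h : IsPartitionFun n l) :
    (n.choose (sqSide n l ^ 2) : ℝ) * ((sqSide n l : ℝ) / n) ^ (sqSide n l ^ 2) *
        ((sqSide n l ^ 2).factorial : ℝ)
      ≤ charDegree n l := by
  obtain ⟨hl, h0, hsum⟩ := h
  by_cases hn : n = 0
  · subst hn
    norm_num [sqSide, charDegree, cells]
  have hn1 : 1 ≤ n := Nat.one_le_iff_ne_zero.mpr hn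
  set s := sqSide n l with hs
  have hl0 : 1 ≤ l 0 := by
    by_contra hc
    push_neg at hc
    have hz : ∀ i, l i = 0 := fun i => by have := hl (Nat.zero_le i); omega
    rw [Finset.sum_congr rfl (fun i _ => hz i)] at hsum
    simp at hsum
    omega
  have hsn : s ≤ n := Nat.findGreatest_le n
  have hP : 0 < s ∧ s ≤ l (s - 1) := by
    have h' := Nat.findGreatest_spec (P := fun j => 0 < j ∧ j ≤ l (j - 1)) (m := 1) hn1
      ⟨Nat.one_pos, by simpa using hl0⟩
    exact h'
  have hs1 : 1 ≤ s := hP.1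
  have hrow : ∀ i, i < s → s ≤ l i := fun i hi => le_trans hP.2 (hl (by omega))
  have hcol : ∀ i, s ≤ i → l i ≤ s := by
    intro i hi
    rcases Nat.lt_or_ge s n with hsn' | hsn'
    · have hgr := Nat.findGreatest_is_greatest
        (P := fun j => 0 < j ∧ j ≤ l (j - 1)) (n := n) (k := s + 1)
        (show sqSide n l < s + 1 by omega) (by omega)
      have hls : l s ≤ s := by
        by_contra hcs
        push_neg at hcs
        exact hgr ⟨by omega, by simp only [Nat.add_sub_cancel]; omega⟩
      exact le_trans (hl hi) hls
    · have : n ≤ i := le_trans hsn' hi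
      rw [h0 i this]
      omega
  have hln : ∀ i, l i ≤ n := by
    intro i
    have h1 : l 0 ≤ n := by
      conv_rhs => rw [← hsum]
      exact Finset.single_le_sum (fun i _ => Nat.zero_le _) (Finset.mem_range.mpr hn1)
    exact le_trans (hl (Nat.zero_le i)) h1
  set A := ∑ i ∈ Finset.range s, l i with hA
  have hAn : A ≤ n := by
    conv_rhs => rw [← hsum]
    exact Finset.sum_le_sum_of_subset (Finset.range_subset_range.mpr hsn)
  have hAs : s * s ≤ A := by
    calc s * s = ∑ _i ∈ Finset.range s, s := by
          rw [Finset.sum_const, Finset.card_range, smul_eq_mul]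
    _ ≤ A := Finset.sum_le_sum (fun i hi => hrow i (Finset.mem_range.mp hi))
  have hs2n : s * s ≤ n := le_trans hAs hAn
  have hIco : ∑ i ∈ Finset.Ico s n, l i = n - A := by
    have h1 : ∑ i ∈ Finset.range s, l i + ∑ i ∈ Finset.Ico s n, l i
        = ∑ i ∈ Finset.range n, l i := by
      simp only [Finset.range_eq_Ico]
      exact Finset.sum_Ico_consecutive l (Nat.zero_le s) hsn
    omega
  have clt := lt_conjPart_iff n l hl h0
  have hcge : ∀ j, j < s → s ≤ conjPart n l j := by
    intro j hj
    have h1 := (clt j (s - 1)).mpr (by have := hP.2; omega)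
    omega
  -- sum of conjugate over first s columns
  have hB : ∑ j ∈ Finset.range s, conjPart n l j = s * s + (n - A) := by
    have h1 : ∑ j ∈ Finset.range s, conjPart n l j
        = ∑ i ∈ Finset.range n, ((Finset.range s).filter (fun j => j + 1 ≤ l i)).card := by
      simp only [conjPart, Finset.card_filter]
      rw [Finset.sum_comm]
    have hminc : ∀ i : ℕ, ((Finset.range s).filter (fun j => j + 1 ≤ l i)).card = min (l i) s := by
      intro i
      have : (Finset.range s).filter (fun j => j + 1 ≤ l i) = Finset.range (min (l i) s) := by
        ext j
        simp only [Finset.mem_filter, Finset.mem_range, Nat.lt_min]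
        omega
      rw [this, Finset.card_range]
    rw [h1]
    rw [Finset.sum_congr rfl (fun i _ => hminc i)]
    have hsplit : ∑ i ∈ Finset.range n, min (l i) s
        = ∑ i ∈ Finset.range s, min (l i) s + ∑ i ∈ Finset.Ico s n, min (l i) s := by
      simp only [Finset.range_eq_Ico]
      exact (Finset.sum_Ico_consecutive _ (Nat.zero_le s) hsn).symm
    rw [hsplit]
    have e1 : ∑ i ∈ Finset.range s, min (l i) s = s * s := by
      rw [Finset.sum_congr rfl (fun i hi => min_eq_right (hrow i (Finset.mem_range.mp hi)))]
      rw [Finset.sum_const, Finset.card_range, smul_eq_mul]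
    have e2 : ∑ i ∈ Finset.Ico s n, min (l i) s = n - A := by
      rw [Finset.sum_congr rfl (fun i hi => min_eq_left (hcol i (Finset.mem_Ico.mp hi).1))]
      exact hIco
    rw [e1, e2]
  -- Durfee square
  set SQ := Finset.range s ×ˢ Finset.range s with hSQ
  have hSQmem : ∀ p : ℕ × ℕ, p ∈ SQ → p.1 < s ∧ p.2 < s := by
    intro p hp
    rw [hSQ, Finset.mem_product, Finset.mem_range, Finset.mem_range] at hp
    exact hp
  have hsqsum : ∑ p ∈ SQ, hookLength n l p.1 p.2 = s * n := by
    have e1 : ∑ p ∈ SQ, (hookLength n l p.1 p.2 + (p.1 + p.2 + 1))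
        = ∑ p ∈ SQ, (l p.1 + conjPart n l p.2) := by
      apply Finset.sum_congr rfl
      intro p hp
      obtain ⟨h1, h2⟩ := hSQmem p hp
      have ha := hrow p.1 h1
      have hb := hcge p.2 h2
      unfold hookLength
      omega
    rw [Finset.sum_add_distrib] at e1
    have hT2 : (∑ j ∈ Finset.range s, j) * 2 + s = s * s := by
      have hga := Finset.sum_range_id_mul_two s
      have h2 : s * (s - 1) + s = s * s := by
        have hss : s - 1 + 1 = s := by omega
        calc s * (s - 1) + s = s * (s - 1 + 1) := (Nat.mul_succ s (s - 1)).symm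
        _ = s * s := by rw [hss]
      omega
    have e2 : ∑ p ∈ SQ, (p.1 + p.2 + 1) = s * s * s := by
      rw [hSQ, Finset.sum_product]
      have einner : ∀ i ∈ Finset.range s, ∑ j ∈ Finset.range s, (i + j + 1)
          = s * (i + 1) + ∑ j ∈ Finset.range s, j := by
        intro i _
        rw [Finset.sum_congr rfl (fun j (_ : j ∈ Finset.range s) => show i + j + 1 = (i + 1) + j by ring)]
        rw [Finset.sum_add_distrib, Finset.sum_const, Finset.card_range, smul_eq_mul]
      rw [Finset.sum_congr rfl einner]
      rw [Finset.sum_add_distrib, Finset.sum_const, Finset.card_range, smul_eq_mul]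
      rw [← Finset.mul_sum]
      have : ∑ i ∈ Finset.range s, (i + 1) = (∑ j ∈ Finset.range s, j) + s := by
        rw [Finset.sum_add_distrib, Finset.sum_const, Finset.card_range, smul_eq_mul, mul_one]
      rw [this]
      set T := ∑ j ∈ Finset.range s, j
      calc s * (T + s) + s * T = s * (T * 2 + s) := by ring
      _ = s * (s * s) := by rw [hT2]
      _ = s * s * s := by ring
    have e3 : ∑ p ∈ SQ, (l p.1 + conjPart n l p.2) = s * A + s * (s * s + (n - A)) := by
      rw [Finset.sum_add_distrib]
      have f1 : ∑ p ∈ SQ, l p.1 = s * A := by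
        rw [hSQ, Finset.sum_product]
        rw [Finset.sum_congr rfl (fun i (_ : i ∈ Finset.range s) =>
          show ∑ _j ∈ Finset.range s, l i = s * l i by
            rw [Finset.sum_const, Finset.card_range, smul_eq_mul])]
        rw [← Finset.mul_sum]
      have f2 : ∑ p ∈ SQ, conjPart n l p.2 = s * (s * s + (n - A)) := by
        rw [hSQ, Finset.sum_product]
        have hinner : ∀ x ∈ Finset.range s,
            (∑ y ∈ Finset.range s, conjPart n l (x, y).2) = s * s + (n - A) := fun x _ => hB
        rw [Finset.sum_congr rfl hinner, Finset.sum_const, Finset.card_range, smul_eq_mul]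
      rw [f1, f2]
    have e4 : s * A + s * (s * s + (n - A)) = s * s * s + s * n := by
      have h5 : A + (s * s + (n - A)) = s * s + n := by omega
      calc s * A + s * (s * s + (n - A)) = s * (A + (s * s + (n - A))) := by ring
      _ = s * (s * s + n) := by rw [h5]
      _ = s * s * s + s * n := by ring
    omega
  have hsqprod : ∏ p ∈ SQ, (hookLength n l p.1 p.2 : ℝ) ≤ ((n : ℝ) / s) ^ (s * s) := by
    apply amgm_pow SQ _ (s * s) ((n : ℝ) / s)
    · rw [hSQ, Finset.card_product, Finset.card_range]
    · positivity
    · intro p _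
      positivity
    · have hcast : ∑ p ∈ SQ, (hookLength n l p.1 p.2 : ℝ) = ((s * n : ℕ) : ℝ) := by
        rw [← Nat.cast_sum, hsqsum]
      rw [hcast]
      have hs0 : (0 : ℝ) < s := by exact_mod_cast hs1
      have hs0' : (s : ℝ) ≠ 0 := ne_of_gt hs0
      have hre : ((s * s : ℕ) : ℝ) * ((n : ℝ) / s) = ((s * n : ℕ) : ℝ) := by
        push_cast
        field_simp
      rw [hre]
  -- the two leg partitions
  have hαa : Antitone (fun i => l i - s) := fun a b hab => Nat.sub_le_sub_right (hl hab) s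
  have hα0 : ∀ i, n ≤ i → l i - s = 0 := fun i hi => by rw [h0 i hi]; omega
  have hαb : l 0 - s ≤ n := by have := hln 0; omega
  have hγa : Antitone (fun i => l (s + i)) := fun a b hab => hl (by omega)
  have hγ0 : ∀ i, n ≤ i → l (s + i) = 0 := fun i hi => h0 _ (by omega)
  have hγb : l (s + 0) ≤ n := hln _
  have hconjα : ∀ j, s ≤ j → conjPart n (fun i => l i - s) (j - s) = conjPart n l j := by
    intro j hj
    have key : ∀ i, (i < conjPart n (fun i => l i - s) (j - s)) ↔ i < conjPart n l j := by
      intro i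
      rw [lt_conjPart_iff n _ hαa hα0, clt]
      omega
    have k1 := key (conjPart n (fun i => l i - s) (j - s))
    have k2 := key (conjPart n l j)
    omega
  have hconjγ : ∀ j, j < s → conjPart n (fun i => l (s + i)) j = conjPart n l j - s := by
    intro j hj
    have key : ∀ i, (i < conjPart n (fun i => l (s + i)) j) ↔ s + i < conjPart n l j := by
      intro i
      rw [lt_conjPart_iff n _ hγa hγ0]
      exact (clt j (s + i)).symm
    have hcs := hcge j hj
    have k1 := key (conjPart n (fun i => l (s + i)) j)
    have k2 := key (conjPart n (fun i => l (s + i)) j - 1)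
    omega
  -- split of the cells and region bijections
  have hsplit1 := Finset.prod_filter_mul_prod_filter_not (cells n l) (fun p => s ≤ p.2)
    (fun p => hookLength n l p.1 p.2)
  have hsplit2 := Finset.prod_filter_mul_prod_filter_not
    ((cells n l).filter (fun p => ¬ s ≤ p.2)) (fun p => s ≤ p.1)
    (fun p => hookLength n l p.1 p.2)
  have hSQeq : ((cells n l).filter (fun p => ¬ s ≤ p.2)).filter (fun p => ¬ s ≤ p.1) = SQ := by
    ext p
    simp only [Finset.mem_filter, cells, Finset.mem_product, Finset.mem_range, hSQ]
    constructor
    · rintro ⟨⟨⟨⟨u1, u2⟩, u3⟩, u4⟩, u5⟩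
      omega
    · rintro ⟨u1, u2⟩
      have := hrow p.1 u1
      refine ⟨⟨⟨⟨?_, ?_⟩, ?_⟩, ?_⟩, ?_⟩ <;> omega
  have hRprod : ∏ p ∈ (cells n l).filter (fun p => s ≤ p.2), hookLength n l p.1 p.2
      = ∏ p ∈ cells n (fun i => l i - s), hookLength n (fun i => l i - s) p.1 p.2 := by
    apply Finset.prod_nbij' (fun p => (p.1, p.2 - s)) (fun q => (q.1, q.2 + s))
    · intro p hp
      simp only [cells, Finset.mem_filter, Finset.mem_product, Finset.mem_range] at hp ⊢
      omega
    · intro q hq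
      simp only [cells, Finset.mem_filter, Finset.mem_product, Finset.mem_range] at hq ⊢
      have := hln q.1
      omega
    · intro p hp
      simp only [Finset.mem_filter] at hp
      have h2 : p.2 - s + s = p.2 := by omega
      exact Prod.ext rfl h2
    · intro q hq
      exact Prod.ext rfl (by omega)
    · intro p hp
      simp only [cells, Finset.mem_filter, Finset.mem_product, Finset.mem_range] at hp
      show hookLength n l p.1 p.2 = hookLength n (fun i => l i - s) p.1 (p.2 - s)
      simp only [hookLength]
      rw [hconjα p.2 hp.2]
      have h1 : p.2 < l p.1 := hp.1.2
      omega
  have hBprod : ∏ p ∈ ((cells n l).filter (fun p => ¬ s ≤ p.2)).filter (fun p => s ≤ p.1),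
        hookLength n l p.1 p.2
      = ∏ p ∈ cells n (fun i => l (s + i)), hookLength n (fun i => l (s + i)) p.1 p.2 := by
    apply Finset.prod_nbij' (fun p => (p.1 - s, p.2)) (fun q => (q.1 + s, q.2))
    · intro p hp
      simp only [cells, Finset.mem_filter, Finset.mem_product, Finset.mem_range] at hp ⊢
      have heq : s + (p.1 - s) = p.1 := by omega
      rw [heq]
      omega
    · intro q hq
      simp only [cells, Finset.mem_filter, Finset.mem_product, Finset.mem_range] at hq ⊢
      have hnz : s + q.1 < n := by
        by_contra hc
        push_neg at hc
        rw [h0 _ hc] at hq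
        omega
      have heq : q.1 + s = s + q.1 := by ring
      rw [heq]
      have := hcol (s + q.1) (by omega)
      omega
    · intro p hp
      simp only [Finset.mem_filter] at hp
      have h2 : p.1 - s + s = p.1 := by omega
      exact Prod.ext h2 rfl
    · intro q hq
      exact Prod.ext (by omega) rfl
    · intro p hp
      simp only [cells, Finset.mem_filter, Finset.mem_product, Finset.mem_range] at hp
      show hookLength n l p.1 p.2 = hookLength n (fun i => l (s + i)) (p.1 - s) p.2
      simp only [hookLength]
      rw [hconjγ p.2 (by omega)]
      have heq : s + (p.1 - s) = p.1 := by omega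
      rw [heq]
      have hcc : p.1 < conjPart n l p.2 := (clt p.2 p.1).mpr hp.1.1.2
      omega
  -- sums of the leg partitions
  have hαsum : ∑ i ∈ Finset.range n, (l i - s) = A - s * s := by
    have h1 : ∑ i ∈ Finset.range n, (l i - s)
        = ∑ i ∈ Finset.range s, (l i - s) + ∑ i ∈ Finset.Ico s n, (l i - s) := by
      simp only [Finset.range_eq_Ico]
      exact (Finset.sum_Ico_consecutive _ (Nat.zero_le s) hsn).symm
    have h2 : ∑ i ∈ Finset.Ico s n, (l i - s) = 0 := Finset.sum_eq_zero (fun i hi => by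
      have := hcol i (Finset.mem_Ico.mp hi).1
      omega)
    have h3 : ∑ i ∈ Finset.range s, (l i - s) + s * s = A := by
      have h4 : ∑ i ∈ Finset.range s, ((l i - s) + s) = A :=
        Finset.sum_congr rfl (fun i hi => by
          have := hrow i (Finset.mem_range.mp hi)
          omega)
      rw [Finset.sum_add_distrib, Finset.sum_const, Finset.card_range, smul_eq_mul] at h4
      omega
    omega
  have hγsum : ∑ i ∈ Finset.range n, l (s + i) = n - A := by
    have h1 : ∑ i ∈ Finset.Ico s n, l i = ∑ i ∈ Finset.range (n - s), l (s + i) :=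
      Finset.sum_Ico_eq_sum_range l s n
    have h2 : ∑ i ∈ Finset.range n, l (s + i)
        = ∑ i ∈ Finset.range (n - s), l (s + i) + ∑ i ∈ Finset.Ico (n - s) n, l (s + i) := by
      simp only [Finset.range_eq_Ico]
      exact (Finset.sum_Ico_consecutive _ (Nat.zero_le (n - s)) (show n - s ≤ n by omega)).symm
    have h3 : ∑ i ∈ Finset.Ico (n - s) n, l (s + i) = 0 :=
      Finset.sum_eq_zero (fun i hi => h0 _ (by
        have := (Finset.mem_Ico.mp hi).1
        omega))
    rw [h2, h3, ← h1, hIco]; omega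
  have hPα := hookProd_le n (A - s * s) (fun i => l i - s) hαa hα0 hαb hαsum
  have hPγ := hookProd_le n (n - A) (fun i => l (s + i)) hγa hγ0 hγb hγsum
  have houtside : (∏ p ∈ cells n (fun i => l i - s), hookLength n (fun i => l i - s) p.1 p.2) *
      (∏ p ∈ cells n (fun i => l (s + i)), hookLength n (fun i => l (s + i)) p.1 p.2)
      ≤ (n - s * s).factorial := by
    calc _ ≤ (A - s * s).factorial * (n - A).factorial := Nat.mul_le_mul hPα hPγ
    _ ≤ ((A - s * s) + (n - A)).factorial :=
        Nat.le_of_dvd (Nat.factorial_pos _) (Nat.factorial_mul_factorial_dvd_factorial_add _ _)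
    _ = (n - s * s).factorial := by congr 1; omega
  -- assemble
  set Dn := ∏ p ∈ cells n l, hookLength n l p.1 p.2 with hDn
  have hDpos : 0 < Dn := Finset.prod_pos (fun p _ => by unfold hookLength; omega)
  have hDcast : ∏ p ∈ cells n l, (hookLength n l p.1 p.2 : ℝ) = (Dn : ℝ) := by
    rw [hDn, Nat.cast_prod]
  have hDeq : Dn = (∏ p ∈ cells n (fun i => l i - s), hookLength n (fun i => l i - s) p.1 p.2) *
      ((∏ p ∈ cells n (fun i => l (s + i)), hookLength n (fun i => l (s + i)) p.1 p.2) *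
        ∏ p ∈ SQ, hookLength n l p.1 p.2) := by
    rw [← hsplit1, ← hsplit2, hSQeq, hRprod, hBprod]
  have hDle : (Dn : ℝ) ≤ ((n - s * s).factorial : ℝ) * ((n : ℝ) / s) ^ (s * s) := by
    rw [hDeq, Nat.cast_mul, Nat.cast_mul]
    have hnn1 : (0:ℝ) ≤ ((∏ p ∈ cells n (fun i => l i - s),
        hookLength n (fun i => l i - s) p.1 p.2 : ℕ) : ℝ) *
        ((∏ p ∈ cells n (fun i => l (s + i)), hookLength n (fun i => l (s + i)) p.1 p.2 : ℕ) : ℝ) := by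
      positivity
    have hout : ((∏ p ∈ cells n (fun i => l i - s),
        hookLength n (fun i => l i - s) p.1 p.2 : ℕ) : ℝ) *
        ((∏ p ∈ cells n (fun i => l (s + i)), hookLength n (fun i => l (s + i)) p.1 p.2 : ℕ) : ℝ)
        ≤ ((n - s * s).factorial : ℝ) := by
      exact_mod_cast houtside
    have hsq : ((∏ p ∈ SQ, hookLength n l p.1 p.2 : ℕ) : ℝ) ≤ ((n : ℝ) / s) ^ (s * s) := by
      rw [Nat.cast_prod]
      exact hsqprod
    calc ((∏ p ∈ cells n (fun i => l i - s), hookLength n (fun i => l i - s) p.1 p.2 : ℕ) : ℝ) *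
          (((∏ p ∈ cells n (fun i => l (s + i)), hookLength n (fun i => l (s + i)) p.1 p.2 : ℕ) : ℝ) *
            ((∏ p ∈ SQ, hookLength n l p.1 p.2 : ℕ) : ℝ))
        = (((∏ p ∈ cells n (fun i => l i - s), hookLength n (fun i => l i - s) p.1 p.2 : ℕ) : ℝ) *
            ((∏ p ∈ cells n (fun i => l (s + i)), hookLength n (fun i => l (s + i)) p.1 p.2 : ℕ) : ℝ)) *
            ((∏ p ∈ SQ, hookLength n l p.1 p.2 : ℕ) : ℝ) := by ring
      _ ≤ ((n - s * s).factorial : ℝ) * ((n : ℝ) / s) ^ (s * s) := by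
          apply mul_le_mul hout hsq (by positivity) (by positivity)
  rw [charDegree, hDcast]
  rw [le_div_iff₀ (by exact_mod_cast hDpos)]
  have hk : s ^ 2 = s * s := sq s
  rw [hk]
  have hLnn : (0:ℝ) ≤ (n.choose (s * s) : ℝ) * ((s : ℝ) / n) ^ (s * s) * ((s * s).factorial : ℝ) := by
    positivity
  calc (n.choose (s * s) : ℝ) * ((s : ℝ) / n) ^ (s * s) * ((s * s).factorial : ℝ) * (Dn : ℝ)
      ≤ (n.choose (s * s) : ℝ) * ((s : ℝ) / n) ^ (s * s) * ((s * s).factorial : ℝ) *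
        (((n - s * s).factorial : ℝ) * ((n : ℝ) / s) ^ (s * s)) :=
        mul_le_mul_of_nonneg_left hDle hLnn
    _ = (n.factorial : ℝ) := by
        have h1 : ((s : ℝ) / n) ^ (s * s) * ((n : ℝ) / s) ^ (s * s) = 1 := by
          rw [← mul_pow]
          have hs0 : (s : ℝ) ≠ 0 := by
            have : (0:ℝ) < s := by exact_mod_cast hs1
            linarith
          have hn0 : (n : ℝ) ≠ 0 := by
            have : (0:ℝ) < n := by exact_mod_cast hn1
            linarith
          rw [div_mul_div_comm]
          rw [mul_comm (s:ℝ) n]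
          rw [div_self (by exact mul_ne_zero hn0 hs0)]
          exact one_pow _
        have h2 : (n.choose (s * s) : ℝ) * ((s * s).factorial : ℝ) * ((n - s * s).factorial : ℝ)
            = (n.factorial : ℝ) := by
          exact_mod_cast congrArg (Nat.cast (R := ℝ))
            (Nat.choose_mul_factorial_mul_factorial hs2n)
        calc (n.choose (s * s) : ℝ) * ((s : ℝ) / n) ^ (s * s) * ((s * s).factorial : ℝ) *
              (((n - s * s).factorial : ℝ) * ((n : ℝ) / s) ^ (s * s))
            = ((n.choose (s * s) : ℝ) * ((s * s).factorial : ℝ) * ((n - s * s).factorial : ℝ)) *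
              (((s : ℝ) / n) ^ (s * s) * ((n : ℝ) / s) ^ (s * s)) := by ring
          _ = (n.factorial : ℝ) * 1 := by rw [h1, h2]
          _ = (n.factorial : ℝ) := mul_one _
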